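/- Corollary III:1.25(i): Let G be a group of nilpotency class at most two, i.e. every commutator is central: ⁅⁅g, h⁆, k⁆ = 1 for all g, h, k ∈ G (equivalently [[G,G],G] = 1). Define the core operation a ∗ b = b · a⁻¹ · b on G. Then (a ∗ b) ∗ c = (a ∗ c⁻¹) ∗ b⁻¹ for all a, b, c ∈ G, and consequently ∗ is entropic: (a ∗ b) ∗ (c ∗ d) = (a ∗ c) ∗ (b ∗ d) for all a, b, c, d ∈ G. -/

import Mathlib

open scoped commutatorElement

/-- Corollary III:1.25(i): in a group of nilpotency class at most two, the core operation
    a ∗ b = b·a⁻¹·b satisfies (a∗b)∗c = (a∗c⁻¹)∗b⁻¹ and is entropic. -/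
theorem stmt_18 {G : Type*} [Group G]
    (hnil : ∀ g h k : G, ⁅⁅g, h⁆, k⁆ = 1)
    (op : G → G → G) (hop : ∀ a b : G, op a b = b * a⁻¹ * b) :
    (∀ a b c : G, op (op a b) c = op (op a c⁻¹) b⁻¹) ∧
    (∀ a b c d : G, op (op a b) (op c d) = op (op a c) (op b d)) := by
  have hcC : ∀ g h k : G, Commute ⁅g, h⁆ k := fun g h k =>
    commutatorElement_eq_one_iff_commute.mp (hnil g h k)
  have swap : ∀ X Y a : G, (∀ x : G, Commute (Y⁻¹ * X) x) → X * a * Y = Y * a * X := by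
    intro X Y a h
    calc X * a * Y = Y * ((Y⁻¹ * X) * (a * Y)) := by group
      _ = Y * ((a * Y) * (Y⁻¹ * X)) := by rw [(h (a * Y)).eq]
      _ = Y * a * X := by group
  constructor
  · intro a b c
    simp only [hop]
    have h : ∀ x : G, Commute ((b⁻¹ * c)⁻¹ * (c * b⁻¹)) x := by
      intro x
      have e : (b⁻¹ * c)⁻¹ * (c * b⁻¹) = ⁅c⁻¹, b⁆ := by
        rw [commutatorElement_def]; group
      rw [e]; exact hcC _ _ x
    have hs := swap (c * b⁻¹) (b⁻¹ * c) a h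
    calc c * (b * a⁻¹ * b)⁻¹ * c = (c * b⁻¹) * a * (b⁻¹ * c) := by group
      _ = (b⁻¹ * c) * a * (c * b⁻¹) := hs
      _ = b⁻¹ * (c⁻¹ * a⁻¹ * c⁻¹)⁻¹ * b⁻¹ := by group
  · intro a b c d
    simp only [hop]
    have h : ∀ x : G, Commute ((b⁻¹ * d * c⁻¹)⁻¹ * (c⁻¹ * d * b⁻¹)) x := by
      intro x
      have e : (b⁻¹ * d * c⁻¹)⁻¹ * (c⁻¹ * d * b⁻¹) = ⁅c, d⁻¹ * b⁆ * ⁅d⁻¹, b⁆ := by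
        rw [commutatorElement_def, commutatorElement_def]; group
      rw [e]; exact Commute.mul_left (hcC c (d⁻¹ * b) x) (hcC d⁻¹ b x)
    have hs := swap (c⁻¹ * d * b⁻¹) (b⁻¹ * d * c⁻¹) a h
    calc (d * c⁻¹ * d) * (b * a⁻¹ * b)⁻¹ * (d * c⁻¹ * d)
        = d * ((c⁻¹ * d * b⁻¹) * a * (b⁻¹ * d * c⁻¹)) * d := by group
      _ = d * ((b⁻¹ * d * c⁻¹) * a * (c⁻¹ * d * b⁻¹)) * d := by rw [hs]
      _ = (d * b⁻¹ * d) * (c * a⁻¹ * c)⁻¹ * (d * b⁻¹ * d) := by group
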